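/- Let X₁,…,Xₙ (n ≥ 2) be i.i.d. real-valued random variables with variance σ² = α > 0 and finite fourth central moment, and let S² be the unbiased sample variance. Then E[(S² − σ²)²] ≥ 2σ⁴/(n·(n−1)), and equality holds if and only if the common distribution is a symmetric two-point distribution: X₁ = a·z + b almost surely for some a ≠ 0, b ∈ ℝ, with z Bernoulli distributed with parameter 1/2. -/

import Mathlib

open MeasureTheory ProbabilityTheory

namespace VarMinAux

noncomputable def PP (ν : Measure ℝ) (k : ℕ) : Measure (Fin k → ℝ) :=
  Measure.pi fun _ => ν

def WW (m : ℝ) (k : ℕ) : (Fin k → ℝ) → ℝ := fun x => ∑ i, (x i - m)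
def VV (m : ℝ) (k : ℕ) : (Fin k → ℝ) → ℝ := fun x => ∑ i, (x i - m) ^ 2

instance (ν : Measure ℝ) [IsProbabilityMeasure ν] (k : ℕ) :
    IsProbabilityMeasure (PP ν k) := by
  unfold PP; infer_instance

theorem moment_rec (ν : Measure ℝ) [IsProbabilityMeasure ν] (m : ℝ)
    (hI : ∀ j : ℕ, j ≤ 4 → Integrable (fun t => (t - m) ^ j) ν)
    (h1 : (∫ t, (t - m) ∂ν) = 0) (k : ℕ) :
    (Integrable (WW m k) (PP ν k) ∧ (∫ x, WW m k x ∂PP ν k) = 0) ∧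
    (Integrable (fun x => WW m k x ^ 2) (PP ν k) ∧
      (∫ x, WW m k x ^ 2 ∂PP ν k) = k * ∫ t, (t - m) ^ 2 ∂ν) ∧
    (Integrable (fun x => WW m k x ^ 3) (PP ν k) ∧
      (∫ x, WW m k x ^ 3 ∂PP ν k) = k * ∫ t, (t - m) ^ 3 ∂ν) ∧
    (Integrable (fun x => WW m k x ^ 4) (PP ν k) ∧
      (∫ x, WW m k x ^ 4 ∂PP ν k)
        = k * (∫ t, (t - m) ^ 4 ∂ν) + 3 * k * (k - 1) * (∫ t, (t - m) ^ 2 ∂ν) ^ 2) ∧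
    (Integrable (VV m k) (PP ν k) ∧ (∫ x, VV m k x ∂PP ν k) = k * ∫ t, (t - m) ^ 2 ∂ν) ∧
    (Integrable (fun x => VV m k x ^ 2) (PP ν k) ∧
      (∫ x, VV m k x ^ 2 ∂PP ν k)
        = k * (∫ t, (t - m) ^ 4 ∂ν) + k * (k - 1) * (∫ t, (t - m) ^ 2 ∂ν) ^ 2) ∧
    (Integrable (fun x => VV m k x * WW m k x) (PP ν k) ∧
      (∫ x, VV m k x * WW m k x ∂PP ν k) = k * ∫ t, (t - m) ^ 3 ∂ν) ∧
    (Integrable (fun x => VV m k x * WW m k x ^ 2) (PP ν k) ∧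
      (∫ x, VV m k x * WW m k x ^ 2 ∂PP ν k)
        = k * (∫ t, (t - m) ^ 4 ∂ν) + k * (k - 1) * (∫ t, (t - m) ^ 2 ∂ν) ^ 2) := by
  set M2 := ∫ t, (t - m) ^ 2 ∂ν with hM2
  set M3 := ∫ t, (t - m) ^ 3 ∂ν with hM3
  set M4 := ∫ t, (t - m) ^ 4 ∂ν with hM4
  induction k with
  | zero =>
      have hW : WW m 0 = fun _ => 0 := by funext x; simp [WW]
      have hV : VV m 0 = fun _ => 0 := by funext x; simp [VV]
      rw [hW, hV]
      norm_num [integrable_const]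
  | succ k ih =>
      obtain ⟨⟨iW1, vW1⟩, ⟨iW2, vW2⟩, ⟨iW3, vW3⟩, ⟨iW4, vW4⟩, ⟨iV1, vV1⟩, ⟨iV2, vV2⟩,
        ⟨iVW, vVW⟩, ⟨iVW2, vVW2⟩⟩ := ih
      have hmp : MeasurePreserving (MeasurableEquiv.piFinSuccAbove (fun _ : Fin (k+1) => ℝ) 0)
          (PP ν (k+1)) (ν.prod (PP ν k)) :=
        measurePreserving_piFinSuccAbove (fun _ => ν) 0
      set e := MeasurableEquiv.piFinSuccAbove (fun _ : Fin (k+1) => ℝ) 0 with he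
      -- transfer lemma
      have key : ∀ G : ℝ × (Fin k → ℝ) → ℝ,
          ((∫ x, G (x 0, fun j => x j.succ) ∂PP ν (k+1)) = ∫ p, G p ∂ν.prod (PP ν k)) ∧
          (Integrable G (ν.prod (PP ν k)) →
            Integrable (fun x => G (x 0, fun j => x j.succ)) (PP ν (k+1))) := by
        intro G
        have h1' : (fun x : Fin (k+1) → ℝ => G (x 0, fun j => x j.succ)) = G ∘ e := by
          funext x
          simp [he, MeasurableEquiv.piFinSuccAbove_apply, Fin.zero_succAbove]
          rfl
        constructor
        · rw [h1']; exact hmp.integral_comp e.measurableEmbedding G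
        · intro hG
          rw [h1']
          exact (hmp.integrable_comp_emb e.measurableEmbedding).mpr hG
      -- pointwise decompositions
      have hWp : ∀ x : Fin (k+1) → ℝ, WW m (k+1) x = (x 0 - m) + WW m k (fun j => x j.succ) := by
        intro x; simp [WW, Fin.sum_univ_succ]; ring
      have hVp : ∀ x : Fin (k+1) → ℝ, VV m (k+1) x = (x 0 - m) ^ 2 + VV m k (fun j => x j.succ) := by
        intro x; simp [VV, Fin.sum_univ_succ]
      -- product helper
      have hprod : ∀ (f : ℝ → ℝ) (g : (Fin k → ℝ) → ℝ), Integrable f ν → Integrable g (PP ν k) →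
          Integrable (fun p : ℝ × (Fin k → ℝ) => f p.1 * g p.2) (ν.prod (PP ν k)) ∧
          (∫ p, f p.1 * g p.2 ∂ν.prod (PP ν k)) = (∫ t, f t ∂ν) * ∫ y, g y ∂PP ν k :=
        fun f g hf hg => ⟨hf.mul_prod hg, integral_prod_mul f g⟩
      have master : ∀ (Q : (Fin (k+1) → ℝ) → ℝ) {G : ℝ × (Fin k → ℝ) → ℝ} {r : ℝ},
          Integrable G (ν.prod (PP ν k)) → (∫ p, G p ∂ν.prod (PP ν k)) = r →
          (∀ x, Q x = G (x 0, fun j => x j.succ)) →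
          Integrable Q (PP ν (k+1)) ∧ (∫ x, Q x ∂PP ν (k+1)) = r := by
        intro Q G r hG hval hQ
        have hQ' : Q = fun x => G (x 0, fun j => x j.succ) := funext hQ
        refine ⟨hQ' ▸ (key G).2 hG, ?_⟩
        rw [hQ', (key G).1, hval]
      have mono : ∀ (cst : ℝ) (j : ℕ), j ≤ 4 → ∀ (g : (Fin k → ℝ) → ℝ) (vg : ℝ),
          Integrable g (PP ν k) → (∫ y, g y ∂PP ν k) = vg →
          Integrable (fun p : ℝ × (Fin k → ℝ) => cst * (p.1 - m) ^ j * g p.2) (ν.prod (PP ν k)) ∧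
          (∫ p, cst * (p.1 - m) ^ j * g p.2 ∂ν.prod (PP ν k))
            = cst * (∫ t, (t - m) ^ j ∂ν) * vg := by
        intro cst j hj g vg hg hvg
        have hf : Integrable (fun t => cst * (t - m) ^ j) ν := (hI j hj).const_mul cst
        refine ⟨(hprod _ _ hf hg).1, ?_⟩
        have h2 := (hprod _ _ hf hg).2
        rw [integral_const_mul, hvg] at h2
        exact h2.trans (by ring)
      have addI : ∀ {A B : ℝ × (Fin k → ℝ) → ℝ} {a b : ℝ},
          Integrable A (ν.prod (PP ν k)) → (∫ p, A p ∂ν.prod (PP ν k)) = a →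
          Integrable B (ν.prod (PP ν k)) → (∫ p, B p ∂ν.prod (PP ν k)) = b →
          Integrable (fun p => A p + B p) (ν.prod (PP ν k)) ∧
          (∫ p, A p + B p ∂ν.prod (PP ν k)) = a + b := by
        intro A B a b hA ha hB hb
        exact ⟨hA.add hB, by rw [integral_add hA hB, ha, hb]⟩
      have i0 : Integrable (fun _ : Fin k → ℝ => (1:ℝ)) (PP ν k) := integrable_const 1
      have v0 : (∫ _y : Fin k → ℝ, (1:ℝ) ∂PP ν k) = 1 := by simp
      have hne0 : (∫ t, (t - m) ^ 0 ∂ν) = 1 := by simp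
      have hne1 : (∫ t, (t - m) ^ 1 ∂ν) = 0 := by simpa using h1
      -- W
      have QW := by
        obtain ⟨iA, vA⟩ := mono 1 1 (by norm_num) (fun _ => (1:ℝ)) 1 i0 v0
        obtain ⟨iB, vB⟩ := mono 1 0 (by norm_num) (WW m k) 0 iW1 vW1
        obtain ⟨iS, vS⟩ := addI iA vA iB vB
        exact master (WW m (k+1)) iS vS (by
          intro x; simp only [hWp x]; ring)
      -- W^2
      have QW2 := by
        obtain ⟨iA, vA⟩ := mono 1 2 (by norm_num) (fun _ => (1:ℝ)) 1 i0 v0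
        obtain ⟨iB, vB⟩ := mono 2 1 (by norm_num) (WW m k) 0 iW1 vW1
        obtain ⟨iC, vC⟩ := mono 1 0 (by norm_num) (fun y => WW m k y ^ 2) _ iW2 vW2
        obtain ⟨iS, vS⟩ := addI iA vA iB vB
        obtain ⟨iS, vS⟩ := addI iS vS iC vC
        exact master (fun x => WW m (k+1) x ^ 2) iS vS (by
          intro x; simp only [hWp x]; ring)
      -- W^3
      have QW3 := by
        obtain ⟨iA, vA⟩ := mono 1 3 (by norm_num) (fun _ => (1:ℝ)) 1 i0 v0
        obtain ⟨iB, vB⟩ := mono 3 2 (by norm_num) (WW m k) 0 iW1 vW1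
        obtain ⟨iC, vC⟩ := mono 3 1 (by norm_num) (fun y => WW m k y ^ 2) _ iW2 vW2
        obtain ⟨iD, vD⟩ := mono 1 0 (by norm_num) (fun y => WW m k y ^ 3) _ iW3 vW3
        obtain ⟨iS, vS⟩ := addI iA vA iB vB
        obtain ⟨iS, vS⟩ := addI iS vS iC vC
        obtain ⟨iS, vS⟩ := addI iS vS iD vD
        exact master (fun x => WW m (k+1) x ^ 3) iS vS (by
          intro x; simp only [hWp x]; ring)
      -- W^4
      have QW4 := by
        obtain ⟨iA, vA⟩ := mono 1 4 (by norm_num) (fun _ => (1:ℝ)) 1 i0 v0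
        obtain ⟨iB, vB⟩ := mono 4 3 (by norm_num) (WW m k) 0 iW1 vW1
        obtain ⟨iC, vC⟩ := mono 6 2 (by norm_num) (fun y => WW m k y ^ 2) _ iW2 vW2
        obtain ⟨iD, vD⟩ := mono 4 1 (by norm_num) (fun y => WW m k y ^ 3) _ iW3 vW3
        obtain ⟨iE, vE⟩ := mono 1 0 (by norm_num) (fun y => WW m k y ^ 4) _ iW4 vW4
        obtain ⟨iS, vS⟩ := addI iA vA iB vB
        obtain ⟨iS, vS⟩ := addI iS vS iC vC
        obtain ⟨iS, vS⟩ := addI iS vS iD vD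
        obtain ⟨iS, vS⟩ := addI iS vS iE vE
        exact master (fun x => WW m (k+1) x ^ 4) iS vS (by
          intro x; simp only [hWp x]; ring)
      -- V
      have QV := by
        obtain ⟨iA, vA⟩ := mono 1 2 (by norm_num) (fun _ => (1:ℝ)) 1 i0 v0
        obtain ⟨iB, vB⟩ := mono 1 0 (by norm_num) (VV m k) _ iV1 vV1
        obtain ⟨iS, vS⟩ := addI iA vA iB vB
        exact master (VV m (k+1)) iS vS (by
          intro x; simp only [hVp x]; ring)
      -- V^2
      have QV2 := by
        obtain ⟨iA, vA⟩ := mono 1 4 (by norm_num) (fun _ => (1:ℝ)) 1 i0 v0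
        obtain ⟨iB, vB⟩ := mono 2 2 (by norm_num) (VV m k) _ iV1 vV1
        obtain ⟨iC, vC⟩ := mono 1 0 (by norm_num) (fun y => VV m k y ^ 2) _ iV2 vV2
        obtain ⟨iS, vS⟩ := addI iA vA iB vB
        obtain ⟨iS, vS⟩ := addI iS vS iC vC
        exact master (fun x => VV m (k+1) x ^ 2) iS vS (by
          intro x; simp only [hVp x]; ring)
      -- V*W
      have QVW := by
        obtain ⟨iA, vA⟩ := mono 1 3 (by norm_num) (fun _ => (1:ℝ)) 1 i0 v0
        obtain ⟨iB, vB⟩ := mono 1 2 (by norm_num) (WW m k) 0 iW1 vW1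
        obtain ⟨iC, vC⟩ := mono 1 1 (by norm_num) (VV m k) _ iV1 vV1
        obtain ⟨iD, vD⟩ := mono 1 0 (by norm_num) (fun y => VV m k y * WW m k y) _ iVW vVW
        obtain ⟨iS, vS⟩ := addI iA vA iB vB
        obtain ⟨iS, vS⟩ := addI iS vS iC vC
        obtain ⟨iS, vS⟩ := addI iS vS iD vD
        exact master (fun x => VV m (k+1) x * WW m (k+1) x) iS vS (by
          intro x; simp only [hWp x, hVp x]; ring)
      -- V*W^2
      have QVW2 := by
        obtain ⟨iA, vA⟩ := mono 1 4 (by norm_num) (fun _ => (1:ℝ)) 1 i0 v0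
        obtain ⟨iB, vB⟩ := mono 2 3 (by norm_num) (WW m k) 0 iW1 vW1
        obtain ⟨iC, vC⟩ := mono 1 2 (by norm_num) (fun y => WW m k y ^ 2) _ iW2 vW2
        obtain ⟨iD, vD⟩ := mono 1 2 (by norm_num) (VV m k) _ iV1 vV1
        obtain ⟨iE, vE⟩ := mono 2 1 (by norm_num) (fun y => VV m k y * WW m k y) _ iVW vVW
        obtain ⟨iF, vF⟩ := mono 1 0 (by norm_num) (fun y => VV m k y * WW m k y ^ 2) _ iVW2 vVW2
        obtain ⟨iS, vS⟩ := addI iA vA iB vB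
        obtain ⟨iS, vS⟩ := addI iS vS iC vC
        obtain ⟨iS, vS⟩ := addI iS vS iD vD
        obtain ⟨iS, vS⟩ := addI iS vS iE vE
        obtain ⟨iS, vS⟩ := addI iS vS iF vF
        exact master (fun x => VV m (k+1) x * WW m (k+1) x ^ 2) iS vS (by
          intro x; simp only [hWp x, hVp x]; ring)
      refine ⟨⟨QW.1, ?_⟩, ⟨QW2.1, ?_⟩, ⟨QW3.1, ?_⟩, ⟨QW4.1, ?_⟩, ⟨QV.1, ?_⟩, ⟨QV2.1, ?_⟩,
        ⟨QVW.1, ?_⟩, ⟨QVW2.1, ?_⟩⟩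
      · rw [QW.2, hne1]; ring
      · rw [QW2.2, hne0, hne1]; push_cast; ring
      · rw [QW3.2, hne0, hne1]; push_cast; ring
      · rw [QW4.2, hne0, hne1]; push_cast; ring
      · rw [QV.2, hne0]; push_cast; ring
      · rw [QV2.2, hne0]; push_cast; ring
      · rw [QVW.2, hne0, hne1]; push_cast; ring
      · rw [QVW2.2, hne0, hne1]; push_cast; ring


theorem var_formula (ν : Measure ℝ) [IsProbabilityMeasure ν] (m σ2 : ℝ)
    (hI : ∀ j : ℕ, j ≤ 4 → Integrable (fun t => (t - m) ^ j) ν)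
    (h1 : (∫ t, (t - m) ∂ν) = 0) (hσ2 : σ2 = ∫ t, (t - m) ^ 2 ∂ν)
    (n : ℕ) (hn : 2 ≤ n) :
    (∫ x : Fin n → ℝ, ((∑ i, (x i - (∑ j, x j) / n) ^ 2) / ((n:ℝ) - 1) - σ2) ^ 2 ∂PP ν n)
      = ((∫ t, (t - m) ^ 4 ∂ν) - σ2 ^ 2) / n + 2 * σ2 ^ 2 / ((n:ℝ) * ((n:ℝ) - 1)) := by
  obtain ⟨⟨iW1, vW1⟩, ⟨iW2, vW2⟩, ⟨iW3, vW3⟩, ⟨iW4, vW4⟩, ⟨iV1, vV1⟩, ⟨iV2, vV2⟩,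
    ⟨iVW, vVW⟩, ⟨iVW2, vVW2⟩⟩ := moment_rec ν m hI h1 n
  have hn2 : (2:ℝ) ≤ (n:ℝ) := by exact_mod_cast hn
  have hn0 : (n:ℝ) ≠ 0 := by linarith
  have hn1 : (n:ℝ) - 1 ≠ 0 := by linarith
  -- pointwise identities
  have hsum : ∀ x : Fin n → ℝ, (∑ j, x j) = WW m n x + n * m := by
    intro x
    simp [WW, Finset.sum_sub_distrib, Finset.card_univ, mul_comm]
  have hdev : ∀ x : Fin n → ℝ, (∑ i, (x i - (∑ j, x j) / n) ^ 2)
      = VV m n x - WW m n x ^ 2 / n := by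
    intro x
    have h2 : ∀ i : Fin n, x i - (∑ j, x j) / n
        = (x i - m) - WW m n x / n := by
      intro i; rw [hsum x]; field_simp; ring
    calc (∑ i, (x i - (∑ j, x j) / n) ^ 2)
        = ∑ i, ((x i - m) ^ 2 - (2 * (WW m n x / n)) * (x i - m) + (WW m n x / n) ^ 2) := by
          refine Finset.sum_congr rfl fun i _ => ?_
          rw [h2 i]; ring
      _ = VV m n x - (2 * (WW m n x / n)) * WW m n x + n * (WW m n x / n) ^ 2 := by
          rw [Finset.sum_add_distrib, Finset.sum_sub_distrib, ← Finset.mul_sum,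
            Finset.sum_const, Finset.card_univ, Fintype.card_fin]
          simp [VV, WW, nsmul_eq_mul]
      _ = VV m n x - WW m n x ^ 2 / n := by field_simp; ring
  have hpt : ∀ x : Fin n → ℝ,
      ((∑ i, (x i - (∑ j, x j) / n) ^ 2) / ((n:ℝ) - 1) - σ2) ^ 2
      = (1 / ((n:ℝ) ^ 2 * ((n:ℝ) - 1) ^ 2)) *
        ((n:ℝ) ^ 2 * VV m n x ^ 2 + 1 * WW m n x ^ 4
          + (-(2 * (n:ℝ))) * (VV m n x * WW m n x ^ 2)
          + (-(2 * (n:ℝ) ^ 2 * ((n:ℝ) - 1) * σ2)) * VV m n x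
          + (2 * (n:ℝ) * ((n:ℝ) - 1) * σ2) * WW m n x ^ 2
          + (n:ℝ) ^ 2 * ((n:ℝ) - 1) ^ 2 * σ2 ^ 2) := by
    intro x
    rw [hdev x]
    field_simp
    ring
  rw [integral_congr_ae (Filter.Eventually.of_forall hpt)]
  -- helpers
  have addI : ∀ {A B : (Fin n → ℝ) → ℝ} {a b : ℝ},
      Integrable A (PP ν n) → (∫ x, A x ∂PP ν n) = a →
      Integrable B (PP ν n) → (∫ x, B x ∂PP ν n) = b →
      Integrable (fun x => A x + B x) (PP ν n) ∧
      (∫ x, A x + B x ∂PP ν n) = a + b := by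
    intro A B a b hA ha hB hb
    exact ⟨hA.add hB, by rw [integral_add hA hB, ha, hb]⟩
  have mulI : ∀ {F : (Fin n → ℝ) → ℝ} {a : ℝ} (c : ℝ),
      Integrable F (PP ν n) → (∫ x, F x ∂PP ν n) = a →
      Integrable (fun x => c * F x) (PP ν n) ∧ (∫ x, c * F x ∂PP ν n) = c * a := by
    intro F a c hF ha
    exact ⟨hF.const_mul c, by rw [integral_const_mul, ha]⟩
  obtain ⟨iA, vA⟩ := mulI ((n:ℝ) ^ 2) iV2 vV2
  obtain ⟨iB, vB⟩ := mulI 1 iW4 vW4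
  obtain ⟨iC, vC⟩ := mulI (-(2 * (n:ℝ))) iVW2 vVW2
  obtain ⟨iD, vD⟩ := mulI (-(2 * (n:ℝ) ^ 2 * ((n:ℝ) - 1) * σ2)) iV1 vV1
  obtain ⟨iE, vE⟩ := mulI (2 * (n:ℝ) * ((n:ℝ) - 1) * σ2) iW2 vW2
  have iF : Integrable (fun _ : Fin n → ℝ => (n:ℝ) ^ 2 * ((n:ℝ) - 1) ^ 2 * σ2 ^ 2) (PP ν n) :=
    integrable_const _
  have vF : (∫ _x : Fin n → ℝ, (n:ℝ) ^ 2 * ((n:ℝ) - 1) ^ 2 * σ2 ^ 2 ∂PP ν n)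
      = (n:ℝ) ^ 2 * ((n:ℝ) - 1) ^ 2 * σ2 ^ 2 := by simp
  obtain ⟨iS, vS⟩ := addI iA vA iB vB
  obtain ⟨iS, vS⟩ := addI iS vS iC vC
  obtain ⟨iS, vS⟩ := addI iS vS iD vD
  obtain ⟨iS, vS⟩ := addI iS vS iE vE
  obtain ⟨iS, vS⟩ := addI iS vS iF vF
  rw [integral_const_mul, vS, ← hσ2]
  field_simp
  ring


theorem map_pi {Ω : Type*} [MeasurableSpace Ω] (μ : Measure Ω) [IsProbabilityMeasure μ]
    (n : ℕ) (X : Fin n → Ω → ℝ) (hmeas : ∀ i, Measurable (X i))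
    (hindep : iIndepFun X μ)
    (ν : Measure ℝ) [IsProbabilityMeasure ν] (hident : ∀ i, μ.map (X i) = ν) :
    μ.map (fun ω i => X i ω) = PP ν n := by
  refine (Measure.pi_eq fun s hs => ?_).symm
  have hT : Measurable (fun ω i => X i ω) := measurable_pi_iff.mpr hmeas
  rw [Measure.map_apply hT (MeasurableSet.univ_pi hs)]
  have hpre : (fun ω i => X i ω) ⁻¹' Set.pi Set.univ s = ⋂ i ∈ Finset.univ, X i ⁻¹' s i := by
    ext ω; simp [Set.mem_pi]
  rw [hpre, hindep.measure_inter_preimage_eq_mul Finset.univ (fun i _ => hs i)]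
  refine Finset.prod_congr rfl fun i _ => ?_
  rw [← hident i, Measure.map_apply (hmeas i) (hs i)]

noncomputable def bern : Measure ℝ :=
  (1/2 : ENNReal) • Measure.dirac (0 : ℝ) + (1/2 : ENNReal) • Measure.dirac (1 : ℝ)

instance : IsProbabilityMeasure bern := by
  constructor
  simp [bern]
  exact ENNReal.inv_two_add_inv_two

theorem integrable_bern (g : ℝ → ℝ) : Integrable g bern := by
  have hig : ∀ x : ℝ, Integrable g (Measure.dirac x) := fun x =>
    (integrable_congr (ae_eq_dirac g)).mpr (integrable_const _)
  exact ((hig 0).smul_measure (by norm_num)).add_measure ((hig 1).smul_measure (by norm_num))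

theorem integral_bern (g : ℝ → ℝ) : ∫ x, g x ∂bern = (g 0 + g 1) / 2 := by
  have hig : ∀ x : ℝ, Integrable g ((1/2 : ENNReal) • Measure.dirac x) := fun x =>
    ((integrable_congr (ae_eq_dirac g)).mpr (integrable_const _)).smul_measure (by norm_num)
  rw [bern, integral_add_measure (hig 0) (hig 1), integral_smul_measure, integral_smul_measure,
    integral_dirac, integral_dirac]
  norm_num
  ring

theorem measure_two_point (ρ : Measure ℝ) [IsProbabilityMeasure ρ]
    (hsupp : ρ (({0, 1} : Set ℝ)ᶜ) = 0) (hmean : (∫ x, x ∂ρ) = 1/2) :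
    ρ = bern := by
  have hms : MeasurableSet ({0, 1} : Set ℝ) :=
    (measurableSet_singleton 0).union (measurableSet_singleton 1)
  have hae : ∀ᵐ x ∂ρ, x ∈ ({0, 1} : Set ℝ) := by
    rw [ae_iff]
    convert hsupp using 2
    rfl
  have hq : (ρ {1}).toReal = 1/2 := by
    rw [← measureReal_def, ← integral_indicator_one (measurableSet_singleton (1:ℝ)), ← hmean]
    refine integral_congr_ae ?_
    filter_upwards [hae] with x hx
    rcases hx with h | h
    · simp_all
    · simp_all
  have hq' : ρ {1} = 1/2 := by
    have hne : ρ {1} ≠ ⊤ := measure_ne_top ρ _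
    rw [← ENNReal.ofReal_toReal hne, hq]
    rw [ENNReal.ofReal_div_of_pos (by norm_num)]
    norm_num
  have hsum : ρ {0} + ρ {1} = 1 := by
    rw [← measure_union (by simp) (measurableSet_singleton 1)]
    have : ({0} : Set ℝ) ∪ {1} = {0, 1} := by ext x; simp [or_comm]
    rw [this]
    have h2 := measure_add_measure_compl (μ := ρ) hms
    rw [hsupp, add_zero] at h2
    rw [h2, measure_univ]
  have hp' : ρ {0} = 1/2 := by
    rw [hq'] at hsum
    have h2 : ρ {0} + 1/2 = 1/2 + 1/2 := by rw [hsum, ENNReal.add_halves]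
    exact WithTop.add_right_cancel (show (1/2:ENNReal) ≠ ⊤ by simp [ENNReal.div_eq_top]) h2
  refine Measure.ext fun s hs => ?_
  have hdecomp : ρ s = ρ (s ∩ {0, 1}) := by
    have h1 := measure_inter_add_diff (μ := ρ) s hms
    have h2 : ρ (s \ {0, 1}) = 0 :=
      measure_mono_null (Set.diff_subset_iff.mpr (by simp)) hsupp
    rw [← h1, h2, add_zero]
  have hsplit : s ∩ ({0, 1} : Set ℝ) = (s ∩ {0}) ∪ (s ∩ {1}) := by
    ext x; simp [Set.mem_inter_iff]; tauto
  have hρs : ρ s = ρ (s ∩ {0}) + ρ (s ∩ {1}) := by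
    rw [hdecomp, hsplit, measure_union (by
      refine Set.disjoint_left.mpr fun x hx hx' => ?_
      have h0 : x = 0 := hx.2
      have h1 : x = 1 := hx'.2
      norm_num [h0] at h1) (hs.inter (measurableSet_singleton 1))]
  have hin : ∀ c : ℝ, c ∈ s → s ∩ {c} = {c} := fun c hc =>
    Set.inter_eq_right.mpr (Set.singleton_subset_iff.mpr hc)
  have hout : ∀ c : ℝ, c ∉ s → s ∩ {c} = ∅ := fun c hc =>
    Set.inter_singleton_eq_empty.mpr hc
  rw [hρs]
  rw [show (bern : Measure ℝ) s = (1/2 : ENNReal) * Measure.dirac (0:ℝ) s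
      + (1/2 : ENNReal) * Measure.dirac (1:ℝ) s by simp [bern]]
  rw [Measure.dirac_apply' _ hs, Measure.dirac_apply' _ hs]
  by_cases h0 : (0:ℝ) ∈ s <;> by_cases h1 : (1:ℝ) ∈ s
  · rw [hin 0 h0, hin 1 h1, hp', hq']
    simp [Set.indicator_of_mem, h0, h1]
  · rw [hin 0 h0, hout 1 h1, hp']
    simp [Set.indicator_of_mem, Set.indicator_of_notMem, h0, h1]
  · rw [hout 0 h0, hin 1 h1, hq']
    simp [Set.indicator_of_mem, Set.indicator_of_notMem, h0, h1]
  · rw [hout 0 h0, hout 1 h1]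
    simp [Set.indicator_of_notMem, h0, h1]


theorem integrable_pow_of_memL4 (ν : Measure ℝ) [IsProbabilityMeasure ν] (m : ℝ)
    (hL4 : MemLp id 4 ν) : ∀ j : ℕ, j ≤ 4 → Integrable (fun t => (t - m) ^ j) ν := by
  have hc : MemLp (fun t => t - m) 4 ν := hL4.sub (memLp_const m)
  have h4 : Integrable (fun t => (t - m) ^ 4) ν := by
    have h := hc.integrable_norm_rpow (by norm_num) (by norm_num)
    refine h.congr (Filter.Eventually.of_forall fun t => ?_)
    have h40 : (0:ℝ) ≤ (t - m) ^ 4 := by positivity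
    show ‖t - m‖ ^ ((4:ENNReal).toReal) = _
    rw [Real.norm_eq_abs, show ((4:ENNReal).toReal) = ((4:ℕ):ℝ) by simp,
      Real.rpow_natCast, ← abs_pow, abs_of_nonneg h40]
  intro j hj
  refine Integrable.mono ((integrable_const (1:ℝ)).add h4)
    (((measurable_id.sub_const m).pow_const j).aestronglyMeasurable)
    (Filter.Eventually.of_forall fun t => ?_)
  have h40 : (0:ℝ) ≤ (t - m) ^ 4 := by positivity
  simp only [Pi.add_apply]
  rw [Real.norm_eq_abs, Real.norm_eq_abs, abs_pow, abs_of_nonneg (by positivity :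
    (0:ℝ) ≤ 1 + (t - m) ^ 4)]
  rcases le_total (|t - m|) 1 with h | h
  · have : |t - m| ^ j ≤ 1 := pow_le_one₀ (abs_nonneg _) h
    nlinarith
  · have h1 : |t - m| ^ j ≤ |t - m| ^ 4 := pow_le_pow_right₀ h hj
    have h2 : |t - m| ^ 4 = (t - m) ^ 4 := by
      rw [← abs_pow, abs_of_nonneg h40]
    nlinarith

end VarMinAux


open VarMinAux in
/-- **Theorem 1 of the paper.** For i.i.d. samples `X₁,…,Xₙ` (`n ≥ 2`) with variance
`σ² = α > 0` and finite fourth central moment, the unbiased sample variance `S²` satisfies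
`E[(S² − σ²)²] ≥ 2σ⁴/(n(n−1))`, with equality iff the common distribution is a symmetric
two-point distribution, i.e. `X₁ = a·z + b` a.s. with `z ∼ Bernoulli(1/2)` (law
`(1/2)δ₀ + (1/2)δ₁`), `a ≠ 0`. -/
theorem var_sample_variance_min_two_point
    {Ω : Type*} [MeasurableSpace Ω] (μ : Measure Ω) [IsProbabilityMeasure μ]
    (n : ℕ) (hn : 2 ≤ n) (X : Fin n → Ω → ℝ)
    (hmeas : ∀ i, Measurable (X i))
    (hindep : iIndepFun X μ)
    (ν : Measure ℝ) [IsProbabilityMeasure ν]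
    (hident : ∀ i, μ.map (X i) = ν)
    (hL4 : MemLp id 4 ν)
    (m σ2 α : ℝ)
    (hm : m = ∫ x, x ∂ν)
    (hσ2 : σ2 = ∫ x, (x - m) ^ 2 ∂ν)
    (hα : σ2 = α) (hαpos : 0 < α)
    (Xbar S2 : Ω → ℝ)
    (hXbar : ∀ ω, Xbar ω = (∑ i, X i ω) / n)
    (hS2 : ∀ ω, S2 ω = (∑ i, (X i ω - Xbar ω) ^ 2) / ((n : ℝ) - 1)) :
    2 * σ2 ^ 2 / ((n : ℝ) * ((n : ℝ) - 1)) ≤ ∫ ω, (S2 ω - σ2) ^ 2 ∂μ ∧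
      ((∫ ω, (S2 ω - σ2) ^ 2 ∂μ) = 2 * σ2 ^ 2 / ((n : ℝ) * ((n : ℝ) - 1)) ↔
        ∃ a b : ℝ, a ≠ 0 ∧
          ∃ z : Ω → ℝ,
            μ.map z = (1/2 : ENNReal) • Measure.dirac (0 : ℝ)
                + (1/2 : ENNReal) • Measure.dirac (1 : ℝ) ∧
            ∀ᵐ ω ∂μ, X ⟨0, by omega⟩ ω = a * z ω + b) := by
  classical
  have hn2 : (2:ℝ) ≤ (n:ℝ) := by exact_mod_cast hn
  have hn0 : (n:ℝ) ≠ 0 := by linarith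
  have hn1 : (n:ℝ) - 1 ≠ 0 := by linarith
  set i0 : Fin n := ⟨0, by omega⟩ with hi0
  have hI := integrable_pow_of_memL4 ν m hL4
  have hid : Integrable (fun t : ℝ => t) ν := hL4.integrable (by norm_num)
  have h1 : (∫ t, (t - m) ∂ν) = 0 := by
    rw [integral_sub hid (integrable_const m), integral_const]
    simp [← hm]
  have hT : Measurable (fun ω i => X i ω) := measurable_pi_iff.mpr hmeas
  have hmap := map_pi μ n X hmeas hindep ν hident
  set F : (Fin n → ℝ) → ℝ :=
    fun x => ((∑ i, (x i - (∑ j, x j) / n) ^ 2) / ((n:ℝ) - 1) - σ2) ^ 2 with hF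
  have hsummeas : Measurable fun x : Fin n → ℝ => (∑ j, x j) :=
    Finset.univ.measurable_sum fun j _ => measurable_pi_apply j
  have hFmeas : Measurable F := by
    apply Measurable.pow_const
    apply Measurable.sub_const
    apply Measurable.div_const
    exact Finset.univ.measurable_sum fun i _ =>
      ((measurable_pi_apply i).sub (hsummeas.div_const _)).pow_const 2
  have hEq1 : (∫ ω, (S2 ω - σ2) ^ 2 ∂μ) = ∫ x, F x ∂(μ.map (fun ω i => X i ω)) := by
    rw [integral_map hT.aemeasurable hFmeas.aestronglyMeasurable]
    refine integral_congr_ae (Filter.Eventually.of_forall fun ω => ?_)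
    show (S2 ω - σ2) ^ 2 = F (fun i => X i ω)
    rw [hS2 ω, hXbar ω]
  have hmain : (∫ ω, (S2 ω - σ2) ^ 2 ∂μ)
      = ((∫ t, (t - m) ^ 4 ∂ν) - σ2 ^ 2) / n + 2 * σ2 ^ 2 / ((n:ℝ) * ((n:ℝ) - 1)) := by
    rw [hEq1, hmap]
    exact var_formula ν m σ2 hI h1 hσ2 n hn
  have addI : ∀ {A B : ℝ → ℝ} {a b : ℝ},
      Integrable A ν → (∫ t, A t ∂ν) = a → Integrable B ν → (∫ t, B t ∂ν) = b →
      Integrable (fun t => A t + B t) ν ∧ (∫ t, A t + B t ∂ν) = a + b := by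
    intro A B a b hA ha hB hb
    exact ⟨hA.add hB, by rw [integral_add hA hB, ha, hb]⟩
  have mulI : ∀ {F' : ℝ → ℝ} {a : ℝ} (c : ℝ),
      Integrable F' ν → (∫ t, F' t ∂ν) = a →
      Integrable (fun t => c * F' t) ν ∧ (∫ t, c * F' t ∂ν) = c * a := by
    intro F' a c hF' ha
    exact ⟨hF'.const_mul c, by rw [integral_const_mul, ha]⟩
  have hrw : (fun t : ℝ => ((t - m) ^ 2 - σ2) ^ 2)
      = fun t => (t - m) ^ 4 + (-(2 * σ2)) * (t - m) ^ 2 + σ2 ^ 2 * (t - m) ^ 0 := by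
    funext t; ring
  obtain ⟨iB, vB⟩ := mulI (-(2 * σ2)) (hI 2 (by norm_num)) rfl
  obtain ⟨iC, vC⟩ := mulI (σ2 ^ 2) (hI 0 (by norm_num)) rfl
  obtain ⟨iS, vS⟩ := addI (hI 4 (by norm_num)) rfl iB vB
  obtain ⟨iS, vS⟩ := addI iS vS iC vC
  have hc2 : Integrable (fun t => ((t - m) ^ 2 - σ2) ^ 2) ν := by
    rw [hrw]; exact iS
  have hdef : (∫ t, ((t - m) ^ 2 - σ2) ^ 2 ∂ν) = (∫ t, (t - m) ^ 4 ∂ν) - σ2 ^ 2 := by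
    have h0int : (∫ t : ℝ, (t - m) ^ 0 ∂ν) = 1 := by simp
    have hstep : (∫ t, ((t - m) ^ 2 - σ2) ^ 2 ∂ν)
        = (∫ t, (t - m) ^ 4 ∂ν) + (-(2 * σ2)) * (∫ t, (t - m) ^ 2 ∂ν)
          + σ2 ^ 2 * (∫ t : ℝ, (t - m) ^ 0 ∂ν) := by
      rw [hrw]; exact vS
    rw [hstep, h0int, ← hσ2]
    ring
  have hnonneg : 0 ≤ ∫ t, ((t - m) ^ 2 - σ2) ^ 2 ∂ν :=
    integral_nonneg fun t => sq_nonneg _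
  constructor
  · rw [hmain, ← hdef]
    have : 0 ≤ (∫ t, ((t - m) ^ 2 - σ2) ^ 2 ∂ν) / n :=
      div_nonneg hnonneg (by linarith)
    linarith
  · have hiff1 : (∫ ω, (S2 ω - σ2) ^ 2 ∂μ) = 2 * σ2 ^ 2 / ((n:ℝ) * ((n:ℝ) - 1))
        ↔ (∫ t, ((t - m) ^ 2 - σ2) ^ 2 ∂ν) = 0 := by
      rw [hmain, ← hdef]
      constructor
      · intro h
        have h2 : (∫ t, ((t - m) ^ 2 - σ2) ^ 2 ∂ν) / n = 0 := by linarith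
        rcases div_eq_zero_iff.mp h2 with h' | h'
        · exact h'
        · exact absurd h' hn0
      · intro h; rw [h]; simp
    rw [hiff1]
    constructor
    · -- forward: equality implies two-point
      intro h0
      have hae : ∀ᵐ t ∂ν, (t - m) ^ 2 = σ2 := by
        have hae0 := (integral_eq_zero_iff_of_nonneg (fun t => sq_nonneg _) hc2).mp h0
        filter_upwards [hae0] with t ht
        have ht' : ((t - m) ^ 2 - σ2) ^ 2 = 0 := ht
        have := (pow_eq_zero_iff two_ne_zero).mp ht'
        linarith
      set σ : ℝ := Real.sqrt α with hσ
      have hσpos : 0 < σ := Real.sqrt_pos.mpr hαpos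
      have hσsq : σ ^ 2 = α := Real.sq_sqrt hαpos.le
      set φ : ℝ → ℝ := fun t => (t - (m - σ)) / (2 * σ) with hφdef
      have hφ : Measurable φ := (measurable_id.sub_const _).div_const _
      have hms : MeasurableSet ({0, 1} : Set ℝ) :=
        (measurableSet_singleton 0).union (measurableSet_singleton 1)
      haveI : IsProbabilityMeasure (ν.map φ) := Measure.isProbabilityMeasure_map hφ.aemeasurable
      have hsupp : (ν.map φ) (({0, 1} : Set ℝ)ᶜ) = 0 := by
        rw [Measure.map_apply hφ hms.compl]
        have haein : ∀ᵐ t ∂ν, φ t ∈ ({0, 1} : Set ℝ) := by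
          filter_upwards [hae] with t ht
          have h2 : (t - m - σ) * (t - m + σ) = 0 := by nlinarith [hσsq, hα]
          rcases mul_eq_zero.mp h2 with h | h
          · right
            show φ t = 1
            rw [hφdef]
            field_simp
            linarith
          · left
            show φ t = 0
            rw [hφdef, div_eq_zero_iff]
            left; linarith
        exact ae_iff.mp haein
      have hmean : (∫ x, x ∂(ν.map φ)) = 1/2 := by
        rw [integral_map (f := fun x : ℝ => x) hφ.aemeasurable measurable_id'.aestronglyMeasurable]
        have hrwφ : (fun t => φ t) = fun t => (1 / (2 * σ)) * (t - m) + 1/2 := by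
          funext t; rw [hφdef]; field_simp; ring
        have hi1 : Integrable (fun t : ℝ => t - m) ν := by
          simpa using hI 1 (by norm_num)
        obtain ⟨iM, vM⟩ := mulI (1 / (2 * σ)) hi1 h1
        obtain ⟨iS2, vS2⟩ := addI iM vM (integrable_const (1/2 : ℝ))
          (by simp : (∫ _t : ℝ, (1/2 : ℝ) ∂ν) = 1/2)
        show (∫ t, φ t ∂ν) = 1/2
        rw [hrwφ, vS2]
        ring
      have hber : ν.map φ = bern := measure_two_point (ν.map φ) hsupp hmean
      refine ⟨2 * σ, m - σ, by positivity, fun ω => φ (X i0 ω), ?_, ?_⟩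
      · have hmm : μ.map (φ ∘ X i0) = bern := by
          rw [← Measure.map_map hφ (hmeas i0), hident i0]
          exact hber
        exact hmm
      · refine Filter.Eventually.of_forall fun ω => ?_
        rw [hφdef]
        field_simp
        ring
    · -- converse: two-point implies equality
      rintro ⟨a, b, ha, z, hz, haeX⟩
      have hzae : AEMeasurable z μ := by
        by_contra hcon
        rw [Measure.map_of_not_aemeasurable hcon] at hz
        have h0 := congrArg (fun ρ : Measure ℝ => ρ Set.univ) hz
        simp at h0
        rw [ENNReal.inv_two_add_inv_two] at h0
        simp at h0
      have hψ : Measurable (fun t : ℝ => a * t + b) := (measurable_id.const_mul a).add_const b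
      have hν : ν = bern.map (fun t => a * t + b) := by
        have h1' : ν = μ.map (fun ω => a * z ω + b) := by
          rw [← hident i0]
          exact Measure.map_congr haeX
        have h2' : μ.map ((fun t => a * t + b) ∘ z) = (μ.map z).map (fun t => a * t + b) :=
          (AEMeasurable.map_map_of_aemeasurable
            (hψ.aemeasurable.mono_ac (Measure.AbsolutelyContinuous.refl _)) hzae).symm
        rw [h1']
        calc μ.map (fun ω => a * z ω + b) = μ.map ((fun t => a * t + b) ∘ z) := rfl
          _ = (μ.map z).map (fun t => a * t + b) := h2'
          _ = bern.map (fun t => a * t + b) := by rw [hz]; rfl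
      have hcomp : ∀ g : ℝ → ℝ, Measurable g → (∫ x, g x ∂ν) = (g b + g (a + b)) / 2 := by
        intro g hg
        rw [hν, integral_map hψ.aemeasurable hg.aestronglyMeasurable, integral_bern]
        rw [show a * 0 + b = b by ring, show a * 1 + b = a + b by ring]
      have hmv : m = b + a / 2 := by
        rw [hm, hcomp (fun x => x) measurable_id]; ring
      have hσv : σ2 = a ^ 2 / 4 := by
        rw [hσ2, hcomp (fun x => (x - m) ^ 2) ((measurable_id.sub_const m).pow_const 2), hmv]
        ring
      have hM4v : (∫ t, (t - m) ^ 4 ∂ν) = a ^ 4 / 16 := by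
        rw [hcomp (fun x => (x - m) ^ 4) ((measurable_id.sub_const m).pow_const 4), hmv]
        ring
      rw [hdef, hM4v, hσv]
      ring
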